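/- Let v_1, …, v_N ∈ ℝ², let c ∈ ℝ, and set r_i = c · v_i for each i (a scaled robot formation). Then for every j = 2, …, N the row vector a_j = (r_j − r_1, v_1 − v_j) ∈ ℝ⁴ equals (c (v_j − v_1), −(v_j − v_1)), so every row of the constraint matrix A₁ (whose rows are a_2, …, a_N) lies in the image of the injective linear map ℝ² → ℝ⁴, w ↦ (c w, −w); consequently rank(A₁) ≤ 2, and rank(A₁) = 2 if and only if the points v_1, …, v_N are not collinear. Moreover b_j = ½(1 − c²)(‖v_1‖² − ‖v_j‖²) for each j; in particular, if ‖v_j‖ = ‖v_1‖ for all j then b_j = 0 for all j. -/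

import Mathlib

/-- Squared Euclidean norm of a point of the plane. -/
def nsq2 (p : ℝ × ℝ) : ℝ := p.1 ^ 2 + p.2 ^ 2

/-- The injective linear map `ℝ² → ℝ⁴`, `w ↦ (c w, −w)`. -/
def phiMap (c : ℝ) : (ℝ × ℝ) →ₗ[ℝ] (Fin 4 → ℝ) where
  toFun w := ![c * w.1, c * w.2, -w.1, -w.2]
  map_add' w₁ w₂ := by
    funext i; fin_cases i <;> simp <;> ring
  map_smul' a w := by
    funext i; fin_cases i <;> simp <;> ring

/-- For a scaled robot formation `r_i = c • v_i`, every row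
`a_j = (r_j − r_1, v_1 − v_j)` of the constraint matrix `A₁` equals
`(c (v_j − v_1), −(v_j − v_1))`, i.e. lies in the image of the injective
linear map `w ↦ (c w, −w)`; consequently `rank A₁ ≤ 2`, with `rank A₁ = 2`
iff the points `v_1, …, v_N` are not collinear. Moreover
`b_j = ½ (1 − c²)(‖v_1‖² − ‖v_j‖²)`; in particular if `‖v_j‖² = ‖v_1‖²`
for all `j` then `b_j = 0` for all `j`. -/
theorem scaled_formation_constraint_matrix
    (N : ℕ) (hN : 3 ≤ N) (c : ℝ) (v : Fin N → ℝ × ℝ) :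
    let r : Fin N → ℝ × ℝ := fun i => c • v i
    let i1 : Fin N := ⟨0, by omega⟩
    let jd : Fin (N - 1) → Fin N := fun j => ⟨j.1 + 1, by have := j.2; omega⟩
    let A1 : Matrix (Fin (N - 1)) (Fin 4) ℝ := fun j =>
      ![(r (jd j)).1 - (r i1).1, (r (jd j)).2 - (r i1).2,
        (v i1).1 - (v (jd j)).1, (v i1).2 - (v (jd j)).2]
    let b : Fin (N - 1) → ℝ := fun j =>
      (1 / 2) * ((v i1).1 ^ 2 + (v i1).2 ^ 2 - (v (jd j)).1 ^ 2 - (v (jd j)).2 ^ 2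
        - (r i1).1 ^ 2 - (r i1).2 ^ 2 + (r (jd j)).1 ^ 2 + (r (jd j)).2 ^ 2)
    (∀ j, A1 j = phiMap c (v (jd j) - v i1)) ∧
    Function.Injective ⇑(phiMap c) ∧
    A1.rank ≤ 2 ∧
    (A1.rank = 2 ↔ ¬ Collinear ℝ (Set.range v)) ∧
    (∀ j, b j = (1 / 2) * (1 - c ^ 2) * (nsq2 (v i1) - nsq2 (v (jd j)))) ∧
    ((∀ j, nsq2 (v j) = nsq2 (v i1)) → ∀ j, b j = 0) := by
  intro r i1 jd A1 b
  have hrow : ∀ j, A1 j = phiMap c (v (jd j) - v i1) := by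
    intro j
    funext i
    fin_cases i <;>
      simp [A1, r, phiMap, Prod.smul_fst, Prod.smul_snd, smul_eq_mul] <;> ring
  have hinj : Function.Injective ⇑(phiMap c) := by
    intro w₁ w₂ h
    have h3 := congrFun h 2
    have h4 := congrFun h 3
    simp [phiMap] at h3 h4
    exact Prod.ext h3 h4
  set g : Fin (N - 1) → ℝ × ℝ := fun j => v (jd j) - v i1 with hg
  set W := Submodule.span ℝ (Set.range g) with hW
  have hWspan : W = vectorSpan ℝ (Set.range v) := by
    rw [vectorSpan_range_eq_span_range_vsub_right ℝ v i1]
    apply le_antisymm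
    · apply Submodule.span_le.2
      rintro _ ⟨j, rfl⟩
      exact Submodule.subset_span ⟨jd j, by simp [g, vsub_eq_sub]⟩
    · apply Submodule.span_le.2
      rintro _ ⟨i, rfl⟩
      by_cases h : i = i1
      · subst h; simp
      · have hi : i.1 ≠ 0 := fun h0 => h (Fin.ext h0)
        have hieq : i = jd ⟨i.1 - 1, by have := i.2; omega⟩ := by
          apply Fin.ext; simp [jd]; omega
        refine Submodule.subset_span ⟨⟨i.1 - 1, by have := i.2; omega⟩, ?_⟩
        simp only [hg, vsub_eq_sub]
        exact congrArg (fun x => v x - v i1) hieq.symm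
  have hA1eq : A1 = ⇑(phiMap c) ∘ g := funext hrow
  have hrank : A1.rank = Module.finrank ℝ W := by
    rw [Matrix.rank_eq_finrank_span_row]
    change Module.finrank ℝ (Submodule.span ℝ (Set.range A1)) = _
    rw [hA1eq, Set.range_comp, ← Submodule.map_span]
    exact (Submodule.equivMapOfInjective _ hinj W).finrank_eq.symm
  have hWle : Module.finrank ℝ W ≤ 2 := by
    have h1 := Submodule.finrank_le W
    simpa using h1
  have hcol : Collinear ℝ (Set.range v) ↔ Module.finrank ℝ W ≤ 1 := by
    rw [hWspan]
    exact collinear_iff_finrank_le_one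
  have hb : ∀ j, b j = (1 / 2) * (1 - c ^ 2) * (nsq2 (v i1) - nsq2 (v (jd j))) := by
    intro j
    simp only [b, r, nsq2, Prod.smul_fst, Prod.smul_snd, smul_eq_mul]
    ring
  refine ⟨hrow, hinj, ?_, ?_, hb, ?_⟩
  · rw [hrank]; exact hWle
  · rw [hrank, hcol]; omega
  · intro hall j
    rw [hb j, hall (jd j)]
    ring
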